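/- For the one-sample cross-entropy objective of the 1-layer transformer in pairwise-token parameterization, the gradients are: ∂J/∂Y = LN(Xᵀb)·(x_{T+1} − α)ᵀ and ∂J/∂Z = x_T·(x_{T+1} − α)ᵀ·Yᵀ·(P⊥_{Xᵀb}/‖Xᵀb‖₂)·Xᵀ·diag(b)·X, where P⊥_v := I − v vᵀ/‖v‖₂². -/

import Mathlib

open Matrix Finset

/-- Componentwise softmax: `softmax a = exp a / (1ᵀ exp a)`. -/
noncomputable def softmax {n : Type*} [Fintype n] (a : n → ℝ) : n → ℝ :=
  fun i => Real.exp (a i) / ∑ j, Real.exp (a j)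

/-- Euclidean norm of a vector. -/
noncomputable def norm2 {n : Type*} [Fintype n] (v : n → ℝ) : ℝ :=
  Real.sqrt (∑ i, v i ^ 2)

/-- ℓ₂-normalization `LN(v) := v/‖v‖₂`. -/
noncomputable def LN {n : Type*} [Fintype n] (v : n → ℝ) : n → ℝ :=
  fun i => v i / norm2 v

/-- `P⊥_v := I − v vᵀ/‖v‖₂²`, projection onto the orthogonal complement of `v`. -/
noncomputable def Pperp {n : Type*} [Fintype n] [DecidableEq n] (v : n → ℝ) :
    Matrix n n ℝ :=
  1 - (norm2 v ^ 2)⁻¹ • Matrix.vecMulVec v v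

/-- Attention vector `b := softmax (X Zᵀ x_T)`. -/
noncomputable def battn {M T : ℕ} (X : Matrix (Fin T) (Fin M) ℝ) (xT : Fin M → ℝ)
    (Z : Matrix (Fin M) (Fin M) ℝ) : Fin T → ℝ :=
  softmax (X.mulVec (Zᵀ.mulVec xT))

/-- Prediction `α := softmax (Yᵀ LN(Xᵀ b))`. -/
noncomputable def alphaPred {M T : ℕ} (X : Matrix (Fin T) (Fin M) ℝ) (xT : Fin M → ℝ)
    (Y Z : Matrix (Fin M) (Fin M) ℝ) : Fin M → ℝ :=
  softmax (Yᵀ.mulVec (LN (Xᵀ.mulVec (battn X xT Z))))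

/-- One-sample cross-entropy objective
`J(Y,Z) := x_{T+1}ᵀ Yᵀ LN(Xᵀb) − log (1ᵀ exp (Yᵀ LN(Xᵀb)))`. -/
noncomputable def Jobj {M T : ℕ} (X : Matrix (Fin T) (Fin M) ℝ) (xT xT1 : Fin M → ℝ)
    (Y Z : Matrix (Fin M) (Fin M) ℝ) : ℝ :=
  (∑ l, xT1 l * Yᵀ.mulVec (LN (Xᵀ.mulVec (battn X xT Z))) l) -
    Real.log (∑ l, Real.exp (Yᵀ.mulVec (LN (Xᵀ.mulVec (battn X xT Z))) l))

lemma deriv_J_aux {M : Type*} [Fintype M] [Nonempty M] (xT1 : M → ℝ)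
    (g : ℝ → M → ℝ) (dg : M → ℝ) (hg : ∀ l, HasDerivAt (fun s => g s l) (dg l) 0) :
    HasDerivAt (fun s => (∑ l, xT1 l * g s l) - Real.log (∑ l, Real.exp (g s l)))
      (∑ l, (xT1 l - softmax (g 0) l) * dg l) 0 := by
  have hSpos : 0 < ∑ l, Real.exp (g 0 l) :=
    Finset.sum_pos (fun l _ => Real.exp_pos _) univ_nonempty
  have h1 : HasDerivAt (fun s => ∑ l, xT1 l * g s l) (∑ l, xT1 l * dg l) 0 :=
    HasDerivAt.fun_sum fun l _ => (hg l).const_mul _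
  have h2 : HasDerivAt (fun s => ∑ l, Real.exp (g s l)) (∑ l, Real.exp (g 0 l) * dg l) 0 :=
    HasDerivAt.fun_sum fun l _ => (hg l).exp
  have h4 := h1.fun_sub (h2.log (ne_of_gt hSpos))
  refine h4.congr_deriv ?_
  simp only [softmax, sub_mul, Finset.sum_sub_distrib, Finset.sum_div,
    div_mul_eq_mul_div]

lemma stdBasis_mulVec_aux {M : ℕ} (Y : Matrix (Fin M) (Fin M) ℝ) (u : Fin M → ℝ)
    (i j l : Fin M) (s : ℝ) :
    ((Y + s • Matrix.single i j 1)ᵀ).mulVec u l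
      = Yᵀ.mulVec u l + s * (if j = l then u i else 0) := by
  simp only [Matrix.mulVec, dotProduct, Matrix.transpose_apply, Matrix.add_apply,
    Matrix.smul_apply, Matrix.single, Matrix.of_apply, smul_eq_mul,
    add_mul, Finset.sum_add_distrib, ite_mul, one_mul, zero_mul, mul_ite, mul_zero,
    mul_one, Finset.sum_ite_eq, Finset.mem_univ, if_true]
  congr 1
  by_cases h : j = l <;> simp [h, mul_comm]

lemma attn_arg_aux {M T : ℕ} (X : Matrix (Fin T) (Fin M) ℝ) (xT : Fin M → ℝ)
    (Z : Matrix (Fin M) (Fin M) ℝ) (i j : Fin M) (s : ℝ) (t : Fin T) :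
    X.mulVec (((Z + s • Matrix.single i j 1)ᵀ).mulVec xT) t
      = X.mulVec (Zᵀ.mulVec xT) t + s * (X t j * xT i) := by
  show (∑ l, X t l * ((Z + s • Matrix.single i j 1)ᵀ).mulVec xT l) = _
  calc (∑ l, X t l * ((Z + s • Matrix.single i j 1)ᵀ).mulVec xT l)
      = ∑ l, (X t l * Zᵀ.mulVec xT l
          + s * (X t l * (if j = l then xT i else 0))) := by
        refine Finset.sum_congr rfl fun l _ => ?_
        rw [stdBasis_mulVec_aux]; ring
    _ = X.mulVec (Zᵀ.mulVec xT) t + s * (X t j * xT i) := by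
        rw [Finset.sum_add_distrib, ← Finset.mul_sum]
        congr 1
        simp [mul_ite, mul_zero, Finset.sum_ite_eq, Finset.mem_univ]

lemma battn_deriv {M T : ℕ} (X : Matrix (Fin T) (Fin M) ℝ) (xT : Fin M → ℝ)
    (Z : Matrix (Fin M) (Fin M) ℝ) (i j : Fin M) (hT : Nonempty (Fin T)) (t : Fin T) :
    HasDerivAt (fun s : ℝ => battn X xT (Z + s • Matrix.single i j 1) t)
      (battn X xT Z t * (X t j * xT i)
        - battn X xT Z t * ∑ r, battn X xT Z r * (X r j * xT i)) 0 := by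
  have hS0pos : 0 < ∑ r, Real.exp (X.mulVec (Zᵀ.mulVec xT) r) :=
    Finset.sum_pos (fun r _ => Real.exp_pos _) univ_nonempty
  have hfun : (fun s : ℝ => battn X xT (Z + s • Matrix.single i j 1) t)
      = fun s : ℝ => Real.exp (X.mulVec (Zᵀ.mulVec xT) t + s * (X t j * xT i))
          / ∑ r, Real.exp (X.mulVec (Zᵀ.mulVec xT) r + s * (X r j * xT i)) := by
    funext s
    simp only [battn, softmax, attn_arg_aux]
  rw [hfun]
  have hlin : ∀ r : Fin T, HasDerivAt
      (fun s : ℝ => X.mulVec (Zᵀ.mulVec xT) r + s * (X r j * xT i)) (X r j * xT i) 0 := by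
    intro r
    simpa using ((hasDerivAt_id (0:ℝ)).mul_const (X r j * xT i)).const_add
      (X.mulVec (Zᵀ.mulVec xT) r)
  have hS : HasDerivAt
      (fun s : ℝ => ∑ r, Real.exp (X.mulVec (Zᵀ.mulVec xT) r + s * (X r j * xT i)))
      (∑ r, Real.exp (X.mulVec (Zᵀ.mulVec xT) r) * (X r j * xT i)) 0 := by
    have := HasDerivAt.fun_sum (fun r (_ : r ∈ univ) => (hlin r).exp)
    simpa using this
  have hSne : (∑ r, Real.exp (X.mulVec (Zᵀ.mulVec xT) r + 0 * (X r j * xT i))) ≠ 0 := by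
    simpa using ne_of_gt hS0pos
  have hdiv := ((hlin t).exp).fun_div hS hSne
  refine hdiv.congr_deriv ?_
  have hb0 : ∀ r, battn X xT Z r
      = Real.exp (X.mulVec (Zᵀ.mulVec xT) r) / ∑ r', Real.exp (X.mulVec (Zᵀ.mulVec xT) r') :=
    fun r => rfl
  have hsum : ∑ r, battn X xT Z r * (X r j * xT i)
      = (∑ r, Real.exp (X.mulVec (Zᵀ.mulVec xT) r) * (X r j * xT i))
        / ∑ r', Real.exp (X.mulVec (Zᵀ.mulVec xT) r') := by
    rw [Finset.sum_div]
    exact Finset.sum_congr rfl fun r _ => by rw [hb0 r]; ring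
  simp only [hb0 t, hsum, zero_mul, add_zero]
  field_simp

lemma mat_entry_aux {M T : ℕ} (X : Matrix (Fin T) (Fin M) ℝ) (Y : Matrix (Fin M) (Fin M) ℝ)
    (b0 : Fin T → ℝ) (v0 : Fin M → ℝ) (n0 : ℝ) (hn0 : n0 ≠ 0)
    (hnrm : norm2 v0 = n0) (l j : Fin M) :
    (Yᵀ * (n0⁻¹ • Pperp v0) * Xᵀ * Matrix.diagonal b0 * X) l j
      = ∑ k, Y k l * ((∑ t, X t k * b0 t * X t j) / n0
          - v0 k * (∑ m, v0 m * ∑ t, X t m * b0 t * X t j) / n0 ^ 3) := by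
  have key : ∀ G : Fin M → ℝ, ∑ t, (∑ m, G m * X t m) * b0 t * X t j
      = ∑ m, G m * ∑ t, X t m * b0 t * X t j := by
    intro G
    have : ∀ t : Fin T, (∑ m, G m * X t m) * b0 t * X t j
        = ∑ m, G m * (X t m * b0 t * X t j) := by
      intro t
      rw [Finset.sum_mul, Finset.sum_mul]
      exact Finset.sum_congr rfl fun m _ => by ring
    simp only [this]
    rw [Finset.sum_comm]
    exact Finset.sum_congr rfl fun m _ => by rw [Finset.mul_sum]
  simp only [Matrix.mul_apply, Matrix.transpose_apply, Matrix.smul_apply, Pperp,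
    Matrix.sub_apply, Matrix.one_apply, Matrix.vecMulVec_apply, smul_eq_mul,
    Matrix.diagonal_apply, hnrm, mul_ite, mul_zero, ite_mul, zero_mul,
    Finset.sum_ite_eq', Finset.mem_univ, if_true]
  rw [key]
  have expand : ∀ m, (∑ k, Y k l * (n0⁻¹ * ((if k = m then 1 else 0)
        - (n0 ^ 2)⁻¹ * (v0 k * v0 m)))) * (∑ t, X t m * b0 t * X t j)
      = (∑ k, (if k = m then Y k l * n0⁻¹ * (∑ t, X t m * b0 t * X t j) else 0))
        - ∑ k, Y k l * (n0 ^ 2)⁻¹ * n0⁻¹ * v0 k * (v0 m * ∑ t, X t m * b0 t * X t j) := by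
    intro m
    rw [Finset.sum_mul, ← Finset.sum_sub_distrib]
    refine Finset.sum_congr rfl fun k _ => ?_
    by_cases h : k = m <;> simp [h] <;> ring
  simp only [expand, Finset.sum_sub_distrib, Finset.sum_ite_eq, Finset.mem_univ,
    if_true]
  have hswap : ∑ m : Fin M, ∑ k : Fin M,
        Y k l * (n0 ^ 2)⁻¹ * n0⁻¹ * v0 k * (v0 m * ∑ t, X t m * b0 t * X t j)
      = ∑ k, Y k l * (v0 k * (∑ m, v0 m * ∑ t, X t m * b0 t * X t j)) / n0 ^ 3 := by
    rw [Finset.sum_comm]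
    refine Finset.sum_congr rfl fun k _ => ?_
    rw [← Finset.mul_sum]
    field_simp
  rw [hswap, ← Finset.sum_sub_distrib]
  refine Finset.sum_congr rfl fun k _ => ?_
  simp only [Finset.sum_ite_eq', Finset.mem_univ, if_true]
  ring

/-- For the one-sample cross-entropy objective of the 1-layer transformer in
pairwise-token parameterization, the gradients (matrices of partial derivatives) are
`∂J/∂Y = LN(Xᵀb)·(x_{T+1} − α)ᵀ` and
`∂J/∂Z = x_T·(x_{T+1} − α)ᵀ·Yᵀ·(P⊥_{Xᵀb}/‖Xᵀb‖₂)·Xᵀ·diag(b)·X`. -/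
theorem stmt_0 (M T : ℕ) (X : Matrix (Fin T) (Fin M) ℝ) (xT xT1 : Fin M → ℝ)
    -- the rows of `X` and the vectors `x_T`, `x_{T+1}` are one-hot
    (hX : ∀ t : Fin T, ∃ l : Fin M, X t = fun j => if j = l then (1 : ℝ) else 0)
    (hxT : ∃ m : Fin M, xT = fun j => if j = m then (1 : ℝ) else 0)
    (hxT1 : ∃ n : Fin M, xT1 = fun j => if j = n then (1 : ℝ) else 0)
    (Y Z : Matrix (Fin M) (Fin M) ℝ)
    -- assume `Xᵀ b ≠ 0`
    (hv : Xᵀ.mulVec (battn X xT Z) ≠ 0) :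
    -- gradient with respect to `Y`
    (∀ i j : Fin M,
      HasDerivAt (fun s : ℝ => Jobj X xT xT1 (Y + s • Matrix.single i j 1) Z)
        (Matrix.vecMulVec (LN (Xᵀ.mulVec (battn X xT Z)))
          (xT1 - alphaPred X xT Y Z) i j) 0) ∧
    -- gradient with respect to `Z`
    (∀ i j : Fin M,
      HasDerivAt (fun s : ℝ => Jobj X xT xT1 Y (Z + s • Matrix.single i j 1))
        (Matrix.vecMulVec xT
          ((xT1 - alphaPred X xT Y Z) ᵥ*
            (Yᵀ * ((norm2 (Xᵀ.mulVec (battn X xT Z)))⁻¹ •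
                Pperp (Xᵀ.mulVec (battn X xT Z))) *
              Xᵀ * Matrix.diagonal (battn X xT Z) * X)) i j) 0) := by
  haveI hMne : Nonempty (Fin M) := by rcases hxT with ⟨m, _⟩; exact ⟨m⟩
  haveI hTne : Nonempty (Fin T) := by
    by_contra h
    haveI := not_nonempty_iff.mp h
    exact hv (funext fun k => by simp [Matrix.mulVec, dotProduct])
  constructor
  · -- gradient in Y
    intro i j
    set u0 := LN (Xᵀ.mulVec (battn X xT Z)) with hu0
    have hg : ∀ l, HasDerivAt
        (fun s : ℝ => ((Y + s • Matrix.single i j 1)ᵀ).mulVec u0 l)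
        (if j = l then u0 i else 0) 0 := by
      intro l
      simp only [stdBasis_mulVec_aux]
      simpa using ((hasDerivAt_id (0:ℝ)).mul_const (if j = l then u0 i else 0)).const_add
        (Yᵀ.mulVec u0 l)
    have H := deriv_J_aux xT1
      (fun (s : ℝ) l => ((Y + s • Matrix.single i j 1)ᵀ).mulVec u0 l) _ hg
    simp only [Jobj]
    convert H using 1
    have h0 : (Y + (0:ℝ) • Matrix.single i j 1) = Y := by simp
    simp only [h0]
    simp [Matrix.vecMulVec_apply, alphaPred, mul_ite, mul_zero, Finset.sum_ite_eq,
      mul_comm, hu0]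
  · -- gradient in Z
    intro i j
    have hZ0 : Z + (0:ℝ) • Matrix.single i j (1:ℝ) = Z := by simp
    obtain ⟨k0, hk0⟩ := Function.ne_iff.mp hv
    have hk0' : Xᵀ.mulVec (battn X xT Z) k0 ≠ 0 := by simpa using hk0
    have hqpos : 0 < ∑ m, (Xᵀ.mulVec (battn X xT Z)) m ^ 2 :=
      Finset.sum_pos' (fun m _ => sq_nonneg _) ⟨k0, Finset.mem_univ _, by positivity⟩
    have hnrm : Real.sqrt (∑ m, (Xᵀ.mulVec (battn X xT Z)) m ^ 2)
        = norm2 (Xᵀ.mulVec (battn X xT Z)) := rfl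
    have hn0pos : 0 < norm2 (Xᵀ.mulVec (battn X xT Z)) := by
      rw [← hnrm]; exact Real.sqrt_pos.mpr hqpos
    have hn0 : norm2 (Xᵀ.mulVec (battn X xT Z)) ≠ 0 := ne_of_gt hn0pos
    have hn0sq : norm2 (Xᵀ.mulVec (battn X xT Z)) ^ 2
        = ∑ m, (Xᵀ.mulVec (battn X xT Z)) m ^ 2 := by
      rw [← hnrm]; exact Real.sq_sqrt hqpos.le
    -- derivative values
    set dv : Fin M → ℝ := fun m => ∑ t, X t m *
      (battn X xT Z t * (X t j * xT i)
        - battn X xT Z t * ∑ r, battn X xT Z r * (X r j * xT i)) with hdvdef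
    set dn : ℝ := (∑ m, 2 * (Xᵀ.mulVec (battn X xT Z)) m * dv m)
      / (2 * norm2 (Xᵀ.mulVec (battn X xT Z))) with hdndef
    set du : Fin M → ℝ := fun k => (dv k * norm2 (Xᵀ.mulVec (battn X xT Z))
      - (Xᵀ.mulVec (battn X xT Z)) k * dn) / norm2 (Xᵀ.mulVec (battn X xT Z)) ^ 2
      with hdudef
    set dg : Fin M → ℝ := fun l => ∑ k, Y k l * du k with hdgdef
    -- derivative of v components
    have hv' : ∀ k, HasDerivAt
        (fun s : ℝ => Xᵀ.mulVec (battn X xT (Z + s • Matrix.single i j 1)) k)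
        (dv k) 0 := by
      intro k
      have hfun : (fun s : ℝ =>
            Xᵀ.mulVec (battn X xT (Z + s • Matrix.single i j 1)) k)
          = fun s : ℝ => ∑ t, X t k * battn X xT (Z + s • Matrix.single i j 1) t := by
        funext s; simp [Matrix.mulVec, dotProduct, Matrix.transpose_apply]
      rw [hfun, hdvdef]
      exact HasDerivAt.fun_sum fun t _ => (battn_deriv X xT Z i j hTne t).const_mul _
    -- derivative of sum of squares
    have hq : HasDerivAt
        (fun s : ℝ => ∑ m, (Xᵀ.mulVec (battn X xT (Z + s • Matrix.single i j 1)) m) ^ 2)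
        (∑ m, 2 * (Xᵀ.mulVec (battn X xT Z)) m * dv m) 0 := by
      refine HasDerivAt.fun_sum fun m _ => ?_
      have h2 := (hv' m).fun_pow 2
      simp only [hZ0] at h2
      refine h2.congr_deriv ?_
      push_cast
      ring
    -- derivative of the norm
    have hsqrt : HasDerivAt
        (fun s : ℝ => Real.sqrt
          (∑ m, (Xᵀ.mulVec (battn X xT (Z + s • Matrix.single i j 1)) m) ^ 2))
        dn 0 := by
      have hne : (∑ m, (Xᵀ.mulVec (battn X xT (Z + (0:ℝ) • Matrix.single i j 1)) m) ^ 2) ≠ 0 := by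
        rw [hZ0]; exact ne_of_gt hqpos
      have h2 := hq.sqrt hne
      simp only [hZ0, hnrm] at h2
      rw [hdndef]
      exact h2
    -- derivative of LN components
    have hu : ∀ k, HasDerivAt
        (fun s : ℝ => LN (Xᵀ.mulVec (battn X xT (Z + s • Matrix.single i j 1))) k)
        (du k) 0 := by
      intro k
      have hfun : (fun s : ℝ =>
            LN (Xᵀ.mulVec (battn X xT (Z + s • Matrix.single i j 1))) k)
          = fun s : ℝ => Xᵀ.mulVec (battn X xT (Z + s • Matrix.single i j 1)) k
              / Real.sqrt (∑ m,
                (Xᵀ.mulVec (battn X xT (Z + s • Matrix.single i j 1)) m) ^ 2) := by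
        funext s; simp only [LN, norm2]
      have hne : Real.sqrt (∑ m,
          (Xᵀ.mulVec (battn X xT (Z + (0:ℝ) • Matrix.single i j 1)) m) ^ 2) ≠ 0 := by
        rw [hZ0, hnrm]; exact hn0
      have hdiv := (hv' k).fun_div hsqrt hne
      simp only [hZ0, hnrm] at hdiv
      rw [hfun, hdudef]
      exact hdiv
    -- derivative of the logits
    have hg : ∀ l, HasDerivAt
        (fun s : ℝ => Yᵀ.mulVec
          (LN (Xᵀ.mulVec (battn X xT (Z + s • Matrix.single i j 1)))) l)
        (dg l) 0 := by
      intro l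
      have hfun : (fun s : ℝ => Yᵀ.mulVec
            (LN (Xᵀ.mulVec (battn X xT (Z + s • Matrix.single i j 1)))) l)
          = fun s : ℝ => ∑ k, Y k l *
              LN (Xᵀ.mulVec (battn X xT (Z + s • Matrix.single i j 1))) k := by
        funext s; simp [Matrix.mulVec, dotProduct, Matrix.transpose_apply]
      rw [hfun, hdgdef]
      exact HasDerivAt.fun_sum fun k _ => (hu k).const_mul _
    have H := deriv_J_aux xT1
      (fun (s : ℝ) l => Yᵀ.mulVec
        (LN (Xᵀ.mulVec (battn X xT (Z + s • Matrix.single i j 1)))) l) _ hg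
    simp only [Jobj]
    convert H using 1
    simp only [hZ0]
    have halpha : softmax (fun l => Yᵀ.mulVec (LN (Xᵀ.mulVec (battn X xT Z))) l)
        = alphaPred X xT Y Z := rfl
    rw [halpha]
    -- structural facts for the final algebra
    have hv0m : ∀ m, (Xᵀ.mulVec (battn X xT Z)) m = ∑ t, X t m * battn X xT Z t := by
      intro m; simp [Matrix.mulVec, dotProduct, Matrix.transpose_apply]
    have hdvm : ∀ m, dv m = xT i * (∑ t, X t m * battn X xT Z t * X t j)
        - (∑ r, battn X xT Z r * (X r j * xT i)) * (Xᵀ.mulVec (battn X xT Z)) m := by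
      intro m
      rw [hdvdef]
      calc ∑ t, X t m * (battn X xT Z t * (X t j * xT i)
              - battn X xT Z t * ∑ r, battn X xT Z r * (X r j * xT i))
          = ∑ t, (xT i * (X t m * battn X xT Z t * X t j)
              - (∑ r, battn X xT Z r * (X r j * xT i)) * (X t m * battn X xT Z t)) :=
            Finset.sum_congr rfl fun t _ => by ring
        _ = _ := by
            rw [Finset.sum_sub_distrib, ← Finset.mul_sum, ← Finset.mul_sum, hv0m]
    have hsum2 : ∑ m, 2 * (Xᵀ.mulVec (battn X xT Z)) m * dv m
        = 2 * (xT i * (∑ m, (Xᵀ.mulVec (battn X xT Z)) m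
                * ∑ t, X t m * battn X xT Z t * X t j)
            - (∑ r, battn X xT Z r * (X r j * xT i))
                * norm2 (Xᵀ.mulVec (battn X xT Z)) ^ 2) := by
      calc ∑ m, 2 * (Xᵀ.mulVec (battn X xT Z)) m * dv m
          = ∑ m, (2 * xT i * ((Xᵀ.mulVec (battn X xT Z)) m
                * ∑ t, X t m * battn X xT Z t * X t j)
              - 2 * (∑ r, battn X xT Z r * (X r j * xT i))
                * (Xᵀ.mulVec (battn X xT Z)) m ^ 2) :=
            Finset.sum_congr rfl fun m _ => by rw [hdvm]; ring
        _ = 2 * xT i * (∑ m, (Xᵀ.mulVec (battn X xT Z)) m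
                * ∑ t, X t m * battn X xT Z t * X t j)
              - 2 * (∑ r, battn X xT Z r * (X r j * xT i))
                * (∑ m, (Xᵀ.mulVec (battn X xT Z)) m ^ 2) := by
            rw [Finset.sum_sub_distrib, ← Finset.mul_sum, ← Finset.mul_sum]
        _ = _ := by rw [← hn0sq]; ring
    have hdu : ∀ k, du k = xT i * ((∑ t, X t k * battn X xT Z t * X t j)
          / norm2 (Xᵀ.mulVec (battn X xT Z))
        - (Xᵀ.mulVec (battn X xT Z)) k * (∑ m, (Xᵀ.mulVec (battn X xT Z)) m
              * ∑ t, X t m * battn X xT Z t * X t j)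
          / norm2 (Xᵀ.mulVec (battn X xT Z)) ^ 3) := by
      intro k
      simp only [hdudef, hdndef]
      rw [hsum2, hdvm k]
      field_simp
      ring
    -- assemble
    have hWM : ((xT1 - alphaPred X xT Y Z) ᵥ*
          (Yᵀ * ((norm2 (Xᵀ.mulVec (battn X xT Z)))⁻¹ • Pperp (Xᵀ.mulVec (battn X xT Z)))
            * Xᵀ * Matrix.diagonal (battn X xT Z) * X)) j
        = ∑ l, (xT1 l - alphaPred X xT Y Z l) *
            (Yᵀ * ((norm2 (Xᵀ.mulVec (battn X xT Z)))⁻¹ • Pperp (Xᵀ.mulVec (battn X xT Z)))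
              * Xᵀ * Matrix.diagonal (battn X xT Z) * X) l j := by
      simp [Matrix.vecMul, dotProduct]
    rw [Matrix.vecMulVec_apply, hWM, Finset.mul_sum]
    refine Finset.sum_congr rfl fun l _ => ?_
    rw [mat_entry_aux X Y (battn X xT Z) (Xᵀ.mulVec (battn X xT Z))
      (norm2 (Xᵀ.mulVec (battn X xT Z))) hn0 rfl l j, hdgdef]
    simp only [hdu]
    rw [show (∑ k, Y k l * (xT i * ((∑ t, X t k * battn X xT Z t * X t j)
          / norm2 (Xᵀ.mulVec (battn X xT Z))
        - (Xᵀ.mulVec (battn X xT Z)) k * (∑ m, (Xᵀ.mulVec (battn X xT Z)) m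
              * ∑ t, X t m * battn X xT Z t * X t j)
          / norm2 (Xᵀ.mulVec (battn X xT Z)) ^ 3)))
        = xT i * ∑ k, Y k l * ((∑ t, X t k * battn X xT Z t * X t j)
          / norm2 (Xᵀ.mulVec (battn X xT Z))
        - (Xᵀ.mulVec (battn X xT Z)) k * (∑ m, (Xᵀ.mulVec (battn X xT Z)) m
              * ∑ t, X t m * battn X xT Z t * X t j)
          / norm2 (Xᵀ.mulVec (battn X xT Z)) ^ 3) from by
      rw [Finset.mul_sum]; exact Finset.sum_congr rfl fun k _ => by ring]
    ring
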